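/- For every integer n ≥ 3 and every real κ > 0, setting r := (1 + 2/√κ) · log n, one has (2/√κ) · arsinh( sinh(√κ r) · sin(π/n) ) > r. -/

import Mathlib

open Real

lemma log_two_mul_lt_arsinh {x : ℝ} (hx : 0 < x) : Real.log (2 * x) < Real.arsinh x := by
  rw [← Real.sinh_lt_sinh, Real.sinh_arsinh, Real.sinh_eq, Real.exp_log (by linarith),
    Real.exp_neg, Real.exp_log (by linarith)]
  have h2x : (0:ℝ) < 2 * x := by linarith
  have : 0 < (2*x)⁻¹ := by positivity
  nlinarith

/-- for every integer `n ≥ 3` and real `κ > 0`, with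
`r := (1 + 2/√κ) · log n`, one has `(2/√κ) · arsinh(sinh(√κ r) · sin(π/n)) > r`. -/
theorem stmt9 (n : ℕ) (hn : 3 ≤ n) (κ : ℝ) (hκ : 0 < κ) :
    (2 / Real.sqrt κ) *
        Real.arsinh (Real.sinh (Real.sqrt κ * ((1 + 2 / Real.sqrt κ) * Real.log n)) *
          Real.sin (Real.pi / n))
      > (1 + 2 / Real.sqrt κ) * Real.log n := by
  set s := Real.sqrt κ with hs_def
  have hs : 0 < s := Real.sqrt_pos.mpr hκ
  have hn3 : (3:ℝ) ≤ n := by exact_mod_cast hn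
  have hn1 : (1:ℝ) < n := by linarith
  have hnpos : (0:ℝ) < n := by linarith
  set L := Real.log n with hL_def
  have hL : 0 < L := Real.log_pos hn1
  have hsr : s * ((1 + 2 / s) * L) = (s + 2) * L := by field_simp
  rw [hsr]
  -- sin bound
  have hπn_le : Real.pi / n ≤ Real.pi / 2 := by
    have h2n : (2:ℝ) ≤ n := by linarith
    gcongr
  have hsin : 2 / (n:ℝ) ≤ Real.sin (Real.pi / n) := by
    have := Real.mul_le_sin (x := Real.pi / n) (by positivity) hπn_le
    have hπ := Real.pi_pos
    calc 2 / (n:ℝ) = 2 / Real.pi * (Real.pi / n) := by field_simp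
    _ ≤ _ := this
  have hsinh_pos : 0 < Real.sinh ((s + 2) * L) := Real.sinh_pos_iff.mpr (by positivity)
  have hsin_pos : 0 < Real.sin (Real.pi / n) :=
    Real.sin_pos_of_pos_of_lt_pi (by positivity)
      (by
        calc Real.pi / n ≤ Real.pi / 2 := hπn_le
        _ < Real.pi := by linarith [Real.pi_pos])
  set x := Real.sinh ((s + 2) * L) * Real.sin (Real.pi / n) with hx_def
  have hx_pos : 0 < x := mul_pos hsinh_pos hsin_pos
  -- key bound: exp ((s+1)*L) ≤ 2 * x
  have hE : Real.exp ((s + 2) * L) = Real.exp ((s + 1) * L) * n := by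
    rw [← Real.exp_log hnpos, ← Real.exp_add]
    rw [← hL_def]
    ring_nf
  have hE1 : (1:ℝ) ≤ Real.exp ((s + 1) * L) := Real.one_le_exp (by positivity)
  have hsinh_lb : (Real.exp ((s + 2) * L) - 1) / 2 ≤ Real.sinh ((s + 2) * L) := by
    rw [Real.sinh_eq]
    have : Real.exp (-((s + 2) * L)) ≤ 1 := Real.exp_le_one_iff.mpr (neg_nonpos.mpr (by positivity))
    linarith
  have hkey : Real.exp ((s + 1) * L) ≤ 2 * x := by
    have h2 : (Real.exp ((s + 2) * L) - 1) / 2 * (2 / n) ≤ x := by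
      rw [hx_def]
      exact mul_le_mul hsinh_lb hsin (by positivity) hsinh_pos.le
    rw [hE] at h2
    have h2' : (Real.exp ((s + 1) * L) * n - 1) / n ≤ x := by
      have : (Real.exp ((s + 1) * L) * n - 1) / 2 * (2 / n)
          = (Real.exp ((s + 1) * L) * n - 1) / n := by field_simp
      linarith [this ▸ h2]
    have h3 : Real.exp ((s + 1) * L) * n - 1 ≤ x * n := (div_le_iff₀ hnpos).mp h2'
    have h4 : (n:ℝ) ≤ Real.exp ((s + 1) * L) * n :=
      le_mul_of_one_le_left hnpos.le hE1
    nlinarith [hx_pos, hn3]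
  have hlog : (s + 1) * L ≤ Real.log (2 * x) := by
    calc (s + 1) * L = Real.log (Real.exp ((s + 1) * L)) := (Real.log_exp _).symm
    _ ≤ Real.log (2 * x) := Real.log_le_log (Real.exp_pos _) hkey
  have harsinh : (s + 1) * L < Real.arsinh x :=
    lt_of_le_of_lt hlog (log_two_mul_lt_arsinh hx_pos)
  have h2s : 0 < 2 / s := by positivity
  have : (2 / s) * ((s + 1) * L) < (2 / s) * Real.arsinh x :=
    mul_lt_mul_of_pos_left harsinh h2s
  have hfinal : (1 + 2 / s) * L < (2 / s) * ((s + 1) * L) := by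
    have : (2 / s) * ((s + 1) * L) = (2 + 2 / s) * L := by field_simp
    rw [this]
    nlinarith
  linarith
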